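/- If T₁, …, T_n are trees, each with at least one edge and none isomorphic to K₂, then pmd(T₁ □ ⋯ □ T_n) = Δ(T₁) + ⋯ + Δ(T_n), i.e., the pmd of the Cartesian product equals its maximum degree. -/

import Mathlib

open SimpleGraph

variable {V : Type*}

/-- A positive matching in a simple graph: a set `M` of pairwise disjoint edges of `G` together
with a vertex weighting `w` such that an edge `uv` of `G` satisfies `w u + w v > 0` iff the edge
belongs to `M`. -/
def IsPositiveMatching (G : SimpleGraph V) (M : Set (Sym2 V)) : Prop :=
  M ⊆ G.edgeSet ∧
  (∀ e ∈ M, ∀ f ∈ M, e ≠ f → ∀ v : V, v ∈ e → v ∉ f) ∧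
  ∃ w : V → ℝ, ∀ u v : V, G.Adj u v → (0 < w u + w v ↔ s(u, v) ∈ M)

/-- A positive matching decomposition of `G` with parts `E 0, …, E (p-1)`: an ordered partition
of the edge set of `G` such that each part is a positive matching of `G` minus the earlier
parts. -/
def IsPMD (G : SimpleGraph V) {p : ℕ} (E : Fin p → Set (Sym2 V)) : Prop :=
  (∀ i j : Fin p, i ≠ j → Disjoint (E i) (E j)) ∧
  (⋃ i, E i) = G.edgeSet ∧
  ∀ i : Fin p, IsPositiveMatching (G.deleteEdges (⋃ j : Fin p, ⋃ (_ : j < i), E j)) (E i)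

/-- The minimum number of parts in a positive matching decomposition of `G`. -/
noncomputable def pmd (G : SimpleGraph V) : ℕ :=
  sInf {p : ℕ | ∃ E : Fin p → Set (Sym2 V), IsPMD G E}

/-- Box (Cartesian) product of a family of graphs. -/
def boxProdPi {ι : Type*} {W : ι → Type*} (G : ∀ i, SimpleGraph (W i)) :
    SimpleGraph (∀ i, W i) where
  Adj a b := ∃ i, (G i).Adj (a i) (b i) ∧ ∀ j, j ≠ i → a j = b j
  symm := ⟨fun _ _ ⟨i, h, hj⟩ => ⟨i, h.symm, fun j hji => (hj j hji).symm⟩⟩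
  loopless := ⟨fun a ⟨i, h, _⟩ => (G i).loopless.irrefl (a i) h⟩


set_option linter.unusedSectionVars false
set_option linter.unusedVariables false
set_option linter.unreachableTactic false
set_option linter.unusedTactic false
set_option maxHeartbeats 1000000

namespace PmdAux



/-- Bundled rooted-tree data: depth, parent, and a proper edge coloring encoded on
the child endpoint. -/
structure Gadget {W : Type*} (T : SimpleGraph W) (Δ : ℕ) where
  root : W
  dep : W → ℕ
  par : W → W
  col : W → Fin Δ
  dep_root : dep root = 0
  root_of_dep : ∀ v, dep v = 0 → v = root
  dep_adj : ∀ u v, T.Adj u v → dep u + 1 = dep v ∨ dep v + 1 = dep u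
  par_adj : ∀ v, v ≠ root → T.Adj (par v) v
  par_dep : ∀ v, v ≠ root → dep (par v) + 1 = dep v
  par_uniq : ∀ u v, T.Adj u v → dep u + 1 = dep v → u = par v
  col_proper : ∀ t a b, T.Adj t a → T.Adj t b → a ≠ b →
    (if dep t < dep a then col a else col t) ≠ (if dep t < dep b then col b else col t)

variable {W : Type*} [Fintype W] [DecidableEq W] {T : SimpleGraph W} [DecidableRel T.Adj]

section DepthLemmas

variable (ht : T.IsTree)
include ht

private lemma dep_le_adj (r : W) {u v : W} (h : T.Adj u v) :
    T.dist r v ≤ T.dist r u + 1 := by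
  have h1 : T.dist r v ≤ T.dist r u + T.dist u v := ht.isConnected.dist_triangle
  have h2 : T.dist u v ≤ 1 := by
    have := SimpleGraph.dist_le (Walk.cons h Walk.nil)
    simpa using this
  omega

private lemma eq_root_of_dep (r : W) {v : W} (h : T.dist r v = 0) : v = r := by
  obtain ⟨p, _, hl⟩ := ht.isConnected.exists_path_of_dist r v
  rw [h] at hl
  exact (Walk.eq_of_length_eq_zero hl).symm

omit ht in
private lemma not_mem_support_of_dist {r u v : W} (h : T.Adj u v)
    (hd : T.dist r u < T.dist r v) {p : T.Walk r u} (hl : p.length = T.dist r u) :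
    v ∉ p.support := by
  intro hv
  have h1 : T.dist r v ≤ (p.takeUntil v hv).length := SimpleGraph.dist_le _
  have h2 : (p.takeUntil v hv).length ≤ p.length := Walk.length_takeUntil_le p hv
  omega

private lemma dep_ne_adj (r : W) {u v : W} (h : T.Adj u v) :
    T.dist r u ≠ T.dist r v := by
  intro heq
  obtain ⟨p, hp, hl⟩ := ht.isConnected.exists_path_of_dist r u
  have hvp : v ∉ p.support := by
    intro hv
    have h1 : T.dist r v ≤ (p.takeUntil v hv).length := SimpleGraph.dist_le _
    have h2 := congrArg Walk.length (p.take_spec hv)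
    rw [Walk.length_append] at h2
    have h3 : (p.dropUntil v hv).length = 0 := by omega
    exact h.ne' (Walk.eq_of_length_eq_zero h3)
  have hP : (p.concat h).IsPath := by
    rw [← Walk.isPath_reverse_iff, Walk.reverse_concat]
    exact (hp.reverse).cons (by simpa using hvp)
  obtain ⟨q, hq, hql⟩ := ht.isConnected.exists_path_of_dist r v
  have huniq := ht.IsAcyclic.path_unique ⟨p.concat h, hP⟩ ⟨q, hq⟩
  have : (p.concat h).length = q.length := by
    have := congrArg (fun x => (x : T.Path r v).val.length) huniq
    simpa using this
  rw [Walk.length_concat] at this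
  omega

private lemma exists_parent (r : W) {v : W} (hv : v ≠ r) :
    ∃ u, T.Adj u v ∧ T.dist r u + 1 = T.dist r v := by
  obtain ⟨p, hp, hl⟩ := ht.isConnected.exists_path_of_dist r v
  obtain ⟨a, ha, q, hq⟩ := Walk.exists_eq_cons_of_ne hv p.reverse
  have hqa : T.dist r a ≤ q.length := by
    have h0 : T.dist a r ≤ q.length := SimpleGraph.dist_le q
    rwa [SimpleGraph.dist_comm (u := r) (v := a)]
  have hql : q.length + 1 = p.length := by
    have := congrArg Walk.length hq
    rw [Walk.length_reverse, Walk.length_cons] at this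
    omega
  have h1 : T.dist r v ≤ T.dist r a + 1 := dep_le_adj ht r ha.symm
  exact ⟨a, ha.symm, by omega⟩

private lemma parent_unique (r : W) {u u' v : W} (hu : T.Adj u v)
    (hdu : T.dist r u + 1 = T.dist r v) (hu' : T.Adj u' v)
    (hdu' : T.dist r u' + 1 = T.dist r v) : u = u' := by
  obtain ⟨p, hp, hl⟩ := ht.isConnected.exists_path_of_dist r u
  obtain ⟨p', hp', hl'⟩ := ht.isConnected.exists_path_of_dist r u'
  have hvp : v ∉ p.support := not_mem_support_of_dist hu (by omega) hl
  have hvp' : v ∉ p'.support := not_mem_support_of_dist hu' (by omega) hl'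
  have hP : (p.concat hu).IsPath := by
    rw [← Walk.isPath_reverse_iff, Walk.reverse_concat]
    exact (hp.reverse).cons (by simpa using hvp)
  have hP' : (p'.concat hu').IsPath := by
    rw [← Walk.isPath_reverse_iff, Walk.reverse_concat]
    exact (hp'.reverse).cons (by simpa using hvp')
  have huniq := ht.IsAcyclic.path_unique ⟨p.concat hu, hP⟩ ⟨p'.concat hu', hP'⟩
  have hw : (p.concat hu) = (p'.concat hu') := congrArg Subtype.val huniq
  have := congrArg (fun x => x.reverse.support) hw
  simp only [Walk.reverse_concat, Walk.support_cons] at this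
  have h1 : p.reverse.support = u :: p.reverse.support.tail := Walk.support_eq_cons _
  have h2 : p'.reverse.support = u' :: p'.reverse.support.tail := Walk.support_eq_cons _
  rw [h1, h2] at this
  simp only [List.cons.injEq] at this
  exact this.2.1

end DepthLemmas

/-- Child-based coloring, by fuel recursion on depth. -/
noncomputable def colD {W : Type*} [DecidableEq W] (Δ : ℕ) (hΔ : 0 < Δ) (root : W) (par : W → W)
    (χ : W → W → Fin Δ) : ℕ → W → Fin Δ
  | 0, _ => ⟨0, hΔ⟩
  | m+1, t =>
    if t = root then ⟨0, hΔ⟩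
    else if par t = root then χ (par t) t
    else Equiv.swap (colD Δ hΔ root par χ m (par t)) (χ (par t) (par (par t))) (χ (par t) t)

section Build

variable (T)
variable (hΔ : 0 < T.maxDegree) (r : W)

noncomputable def gpar : W → W := fun v =>
  if h : ∃ u, T.Adj u v ∧ T.dist r u + 1 = T.dist r v then h.choose else v

noncomputable def gchi : W → W → Fin T.maxDegree := fun u v =>
  if h : v ∈ T.neighborFinset u then
    Fin.castLE (le_trans (le_of_eq (T.card_neighborFinset_eq_degree u))
      (T.degree_le_maxDegree u)) ((T.neighborFinset u).equivFin ⟨v, h⟩)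
  else ⟨0, hΔ⟩

noncomputable def gcol : W → Fin T.maxDegree := fun t =>
  colD _ hΔ r (gpar T r) (gchi T hΔ) (T.dist r t) t

lemma gchi_inj {u a b : W} (ha : T.Adj u a) (hb : T.Adj u b)
    (h : gchi T hΔ u a = gchi T hΔ u b) : a = b := by
  simp only [gchi] at h
  rw [dif_pos ((T.mem_neighborFinset u a).2 ha),
    dif_pos ((T.mem_neighborFinset u b).2 hb)] at h
  have h2 : ((T.neighborFinset u).equivFin ⟨a, (T.mem_neighborFinset u a).2 ha⟩) =
      ((T.neighborFinset u).equivFin ⟨b, (T.mem_neighborFinset u b).2 hb⟩) := by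
    apply Fin.ext
    have := congrArg Fin.val h
    exact this
  have := (T.neighborFinset u).equivFin.injective h2
  exact congrArg Subtype.val this

variable (ht : T.IsTree)
include ht

lemma gpar_spec {v : W} (hv : v ≠ r) :
    T.Adj (gpar T r v) v ∧ T.dist r (gpar T r v) + 1 = T.dist r v := by
  have h := exists_parent ht r hv
  rw [gpar, dif_pos h]
  exact h.choose_spec

lemma gpar_uniq {u v : W} (hu : T.Adj u v) (hd : T.dist r u + 1 = T.dist r v) :
    u = gpar T r v := by
  have hv : v ≠ r := by
    intro h
    rw [h, SimpleGraph.dist_self] at hd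
    omega
  obtain ⟨h1, h2⟩ := gpar_spec T r ht hv
  exact parent_unique ht r hu hd h1 h2

lemma gcol_child {t : W} (htr : t ≠ r) :
    gcol T hΔ r t = if gpar T r t = r then gchi T hΔ (gpar T r t) t
      else Equiv.swap (gcol T hΔ r (gpar T r t)) (gchi T hΔ (gpar T r t) (gpar T r (gpar T r t)))
        (gchi T hΔ (gpar T r t) t) := by
  have h0 : T.dist r t ≠ 0 := fun h => htr (eq_root_of_dep ht r h)
  obtain ⟨m, hm⟩ : ∃ m, T.dist r t = m + 1 := ⟨T.dist r t - 1, by omega⟩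
  have hpd : T.dist r (gpar T r t) = m := by
    have := (gpar_spec T r ht htr).2
    omega
  rw [gcol, hm]
  simp only [colD, if_neg htr]
  rw [gcol, hpd]

lemma gcol_ne_par {t : W} (htr : t ≠ r) (hpr : gpar T r t ≠ r) :
    gcol T hΔ r t ≠ gcol T hΔ r (gpar T r t) := by
  intro h
  rw [gcol_child T hΔ r ht htr, if_neg hpr] at h
  have h2 : gchi T hΔ (gpar T r t) t = gchi T hΔ (gpar T r t) (gpar T r (gpar T r t)) := by
    have := congrArg (Equiv.swap (gcol T hΔ r (gpar T r t))
      (gchi T hΔ (gpar T r t) (gpar T r (gpar T r t)))) h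
    rwa [Equiv.swap_apply_self, Equiv.swap_apply_left] at this
  have hadj1 : T.Adj (gpar T r t) t := (gpar_spec T r ht htr).1
  have hadj2 : T.Adj (gpar T r t) (gpar T r (gpar T r t)) := ((gpar_spec T r ht hpr).1).symm
  have heq := gchi_inj T hΔ hadj1 hadj2 h2
  have d1 := (gpar_spec T r ht htr).2
  have d2 := (gpar_spec T r ht hpr).2
  rw [← heq] at d2
  omega

lemma gcol_sibling {a b : W} (har : a ≠ r) (hbr : b ≠ r) (hpab : gpar T r a = gpar T r b)
    (hcol : gcol T hΔ r a = gcol T hΔ r b) : a = b := by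
  rw [gcol_child T hΔ r ht har, gcol_child T hΔ r ht hbr, ← hpab] at hcol
  set u := gpar T r a with hu
  have hadja : T.Adj u a := (gpar_spec T r ht har).1
  have hadjb : T.Adj u b := by
    have := (gpar_spec T r ht hbr).1
    rwa [← hpab] at this
  by_cases hur : u = r
  · rw [if_pos hur, if_pos hur] at hcol
    exact gchi_inj T hΔ hadja hadjb hcol
  · rw [if_neg hur, if_neg hur] at hcol
    exact gchi_inj T hΔ hadja hadjb ((Equiv.swap _ _).injective hcol)

include hΔ in
theorem exists_gadget [Nonempty W] : Nonempty (Gadget T T.maxDegree) := by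
  classical
  set r := Classical.arbitrary W with hr
  refine ⟨⟨r, T.dist r, gpar T r, gcol T hΔ r, SimpleGraph.dist_self, ?_, ?_, ?_, ?_, ?_, ?_⟩⟩
  · exact fun v h => eq_root_of_dep ht r h
  · intro u v h
    have h1 := dep_le_adj ht r h
    have h2 := dep_le_adj ht r h.symm
    have h3 := dep_ne_adj ht r h
    omega
  · exact fun v hv => (gpar_spec T r ht hv).1
  · exact fun v hv => (gpar_spec T r ht hv).2
  · exact fun u v h hd => gpar_uniq T r ht h hd
  · -- properness
    intro t a b hta htb hab
    have hda := dep_le_adj ht r hta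
    have hda' := dep_le_adj ht r hta.symm
    have hna := dep_ne_adj ht r hta
    have hdb := dep_le_adj ht r htb
    have hdb' := dep_le_adj ht r htb.symm
    have hnb := dep_ne_adj ht r htb
    rcases (by omega : T.dist r t + 1 = T.dist r a ∨ T.dist r a + 1 = T.dist r t) with hc1 | hc1 <;>
      rcases (by omega : T.dist r t + 1 = T.dist r b ∨ T.dist r b + 1 = T.dist r t) with hc2 | hc2
    · -- both children
      rw [if_pos (by omega), if_pos (by omega)]
      intro hcol
      have har : a ≠ r := by
        intro h; rw [h, SimpleGraph.dist_self] at hc1; omega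
      have hbr : b ≠ r := by
        intro h; rw [h, SimpleGraph.dist_self] at hc2; omega
      have hpa : t = gpar T r a := gpar_uniq T r ht hta hc1
      have hpb : t = gpar T r b := gpar_uniq T r ht htb hc2
      exact hab (gcol_sibling T hΔ r ht har hbr (hpa ▸ hpb ▸ rfl) hcol)
    · -- a child, b parent
      rw [if_pos (by omega), if_neg (by omega)]
      have har : a ≠ r := by
        intro h; rw [h, SimpleGraph.dist_self] at hc1; omega
      have htr : t ≠ r := by
        intro h; rw [h, SimpleGraph.dist_self] at hc2; omega
      have hpa : t = gpar T r a := gpar_uniq T r ht hta hc1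
      have := gcol_ne_par T hΔ r ht har (by rw [← hpa]; exact htr)
      rwa [← hpa] at this
    · -- a parent, b child
      rw [if_neg (by omega), if_pos (by omega)]
      have hbr : b ≠ r := by
        intro h; rw [h, SimpleGraph.dist_self] at hc2; omega
      have htr : t ≠ r := by
        intro h; rw [h, SimpleGraph.dist_self] at hc1; omega
      have hpb : t = gpar T r b := gpar_uniq T r ht htb hc2
      have := gcol_ne_par T hΔ r ht hbr (by rw [← hpb]; exact htr)
      rw [← hpb] at this
      exact fun h => this h.symm
    · -- both parents
      exfalso
      have hpa : a = gpar T r t := gpar_uniq T r ht hta.symm hc1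
      have hpb : b = gpar T r t := gpar_uniq T r ht htb.symm hc2
      exact hab (hpa ▸ hpb ▸ rfl)

end Build



noncomputable def Xd {W : Type*} [DecidableEq W] (root : W) (par : W → W)
    (pat : W → ℕ → ℝ) : ℕ → W → ℕ → ℝ
  | 0, _, _ => -1
  | m+1, t, δ => if t = root then -1 else pat t δ - Xd root par pat m (par t) δ

section Xlem

variable {W : Type*} [DecidableEq W] (root : W) (par : W → W) (dep : W → ℕ)
  (pat : W → ℕ → ℝ)

noncomputable def Xf : W → ℕ → ℝ := fun t δ => Xd root par pat (dep t) t δ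

variable (hroot : dep root = 0) (hroot0 : ∀ t, dep t = 0 → t = root)
  (hpar : ∀ t, t ≠ root → dep (par t) + 1 = dep t)
  (hb : ∀ t δ, |pat t δ| ≤ 2 * 6 ^ dep t)

include hroot in
lemma Xf_root (δ : ℕ) : Xf root par dep pat root δ = -1 := by
  rw [Xf, hroot]
  rfl

include hpar hroot0 in
lemma Xf_step {t : W} (h : t ≠ root) (δ : ℕ) :
    Xf root par dep pat t δ = pat t δ - Xf root par dep pat (par t) δ := by
  have h0 : dep t ≠ 0 := fun hh => h (hroot0 t hh)
  obtain ⟨m, hm⟩ : ∃ m, dep t = m + 1 := ⟨dep t - 1, by omega⟩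
  have hp : dep (par t) = m := by have := hpar t h; omega
  rw [Xf, Xf, hm, hp]
  simp only [Xd, if_neg h]

include hroot hroot0 hpar hb in
lemma Xf_bound : ∀ t δ, |Xf root par dep pat t δ| ≤ 3 * 6 ^ dep t := by
  suffices h : ∀ m t δ, dep t ≤ m → |Xf root par dep pat t δ| ≤ 3 * 6 ^ dep t by
    exact fun t δ => h (dep t) t δ le_rfl
  intro m
  induction m with
  | zero =>
    intro t δ hd
    rw [Xf, (by omega : dep t = 0)]
    show |(-1 : ℝ)| ≤ _
    rw [abs_neg, abs_one]
    have h1 : (1:ℝ) ≤ 6 ^ dep t := one_le_pow₀ (by norm_num)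
    linarith
  | succ m ih =>
    intro t δ hd
    by_cases hd0 : dep t = 0
    · rw [Xf, hd0]
      show |(-1 : ℝ)| ≤ _
      rw [abs_neg, abs_one]
      have h1 : (1:ℝ) ≤ 6 ^ dep t := one_le_pow₀ (by norm_num)
      linarith
    · have h : t ≠ root := fun hh => hd0 (hh ▸ hroot)
      rw [Xf_step root par dep pat hroot0 hpar h δ]
      have h0 : dep t ≠ 0 := fun hh => h (hroot0 t hh)
      have hp := hpar t h
      have hih := ih (par t) δ (by omega)
      have hpb := hb t δ
      calc |pat t δ - Xf root par dep pat (par t) δ|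
          ≤ |pat t δ| + |Xf root par dep pat (par t) δ| := abs_sub _ _
        _ ≤ 2 * 6 ^ dep t + 3 * 6 ^ dep (par t) := by gcongr
        _ ≤ 3 * 6 ^ dep t := by
            obtain ⟨k, hk⟩ : ∃ k, dep t = k + 1 := ⟨dep t - 1, by omega⟩
            have hpk : dep (par t) = k := by omega
            rw [hk, hpk, pow_succ]
            have h6 : (0:ℝ) < 6 ^ k := by positivity
            nlinarith
  
include hroot hroot0 hpar hb in
lemma Xf_pair {t : W} (δ δ' : ℕ)
    (hps : t ≠ root → pat t δ + pat t δ' ≤ 1 - 2 * 6 ^ dep t) :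
    Xf root par dep pat t δ + Xf root par dep pat t δ' ≤ 0 := by
  by_cases h : t = root
  · rw [h, Xf_root root par dep pat hroot, Xf_root root par dep pat hroot]
    norm_num
  · rw [Xf_step root par dep pat hroot0 hpar h, Xf_step root par dep pat hroot0 hpar h]
    have h0 : dep t ≠ 0 := fun hh => h (hroot0 t hh)
    have hp := hpar t h
    have b1 := Xf_bound root par dep pat hroot hroot0 hpar hb (par t) δ
    have b2 := Xf_bound root par dep pat hroot hroot0 hpar hb (par t) δ'
    have hsum := hps h
    obtain ⟨k, hk⟩ : ∃ k, dep t = k + 1 := ⟨dep t - 1, by omega⟩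
    have hpk : dep (par t) = k := by omega
    rw [hk] at hsum
    rw [hpk] at b1 b2
    have h6 : (0:ℝ) < 6 ^ k := by positivity
    have e1 : |Xf root par dep pat (par t) δ| ≤ 3 * 6 ^ k := b1
    have e2 : |Xf root par dep pat (par t) δ'| ≤ 3 * 6 ^ k := b2
    rw [abs_le] at e1 e2
    rw [pow_succ] at hsum
    have h61 : (1:ℝ) ≤ 6 ^ k := one_le_pow₀ (by norm_num)
    nlinarith
    
end Xlem




section Product

variable {n : ℕ} {W : Fin n → Type*} [∀ i, Fintype (W i)] [∀ i, DecidableEq (W i)]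
  (T : ∀ i, SimpleGraph (W i)) [∀ i, DecidableRel (T i).Adj]
  (g : ∀ i, Gadget (T i) ((T i).maxDegree))

/-- offset of block `i` -/
def off (i : Fin n) : ℕ := ∑ j ∈ Finset.univ.filter (fun j => j < i), (T j).maxDegree

lemma off_add_le {i i' : Fin n} (h : i < i') : off T i + (T i).maxDegree ≤ off T i' := by
  have hsub : insert i (Finset.univ.filter (fun j => j < i)) ⊆
      Finset.univ.filter (fun j => j < i') := by
    intro j hj
    rcases Finset.mem_insert.1 hj with rfl | hj
    · exact Finset.mem_filter.2 ⟨Finset.mem_univ _, h⟩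
    · exact Finset.mem_filter.2 ⟨Finset.mem_univ _, lt_trans (Finset.mem_filter.1 hj).2 h⟩
  have hnin : i ∉ Finset.univ.filter (fun j : Fin n => j < i) := by
    simp
  have := Finset.sum_le_sum_of_subset (f := fun j => (T j).maxDegree) hsub
  rwa [Finset.sum_insert hnin, add_comm] at this

lemma off_add_lt {i : Fin n} {k : ℕ} (hk : k < (T i).maxDegree) :
    off T i + k < ∑ j, (T j).maxDegree := by
  have hsub : insert i (Finset.univ.filter (fun j => j < i)) ⊆ Finset.univ := by
    intro j _; exact Finset.mem_univ _
  have hnin : i ∉ Finset.univ.filter (fun j : Fin n => j < i) := by simp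
  have := Finset.sum_le_sum_of_subset (f := fun j => (T j).maxDegree) hsub
  rw [Finset.sum_insert hnin] at this
  beta_reduce at this
  unfold off
  omega

lemma block_inj {i i' : Fin n} {k k' : ℕ} (hk : k < (T i).maxDegree)
    (hk' : k' < (T i').maxDegree) (h : off T i + k = off T i' + k') : i = i' ∧ k = k' := by
  rcases lt_trichotomy i i' with hlt | heq | hlt
  · have := off_add_le T hlt; omega
  · subst heq
    exact ⟨rfl, by omega⟩
  · have := off_add_le T hlt; omega

/-- total depth in coordinates other than `i` -/
def sig (i : Fin n) (z : ∀ j, W j) : ℕ := ∑ j ∈ Finset.univ.erase i, (g j).dep (z j)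

/-- color of the tree edge `{a, b}` (encoded on the deeper endpoint) -/
def ecolN (i : Fin n) (a b : W i) : ℕ :=
  if (g i).dep a < (g i).dep b then ((g i).col b : ℕ) else ((g i).col a : ℕ)

lemma ecolN_symm {i : Fin n} {a b : W i} (h : (T i).Adj a b) :
    ecolN T g i a b = ecolN T g i b a := by
  rcases (g i).dep_adj a b h with hd | hd <;> rw [ecolN, ecolN] <;>
    rcases lt_trichotomy ((g i).dep a) ((g i).dep b) with h1 | h1 | h1 <;>
    first
      | (rw [if_pos h1, if_neg (by omega)])
      | omega
      | (rw [if_neg (by omega), if_pos (by omega)])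
      | (rw [if_neg (by omega), if_neg (by omega)])

lemma ecolN_lt {i : Fin n} (a b : W i) : ecolN T g i a b < (T i).maxDegree ∨
    ((T i).maxDegree = 0 ∧ ecolN T g i a b = 0) := by
  rw [ecolN]
  split <;> [skip; skip] <;>
    first
      | (left; exact ((g i).col b).isLt)
      | (left; exact ((g i).col a).isLt)

lemma sig_eq {i : Fin n} {u v : ∀ j, W j} (h : ∀ j, j ≠ i → u j = v j) :
    sig T g i u = sig T g i v := by
  apply Finset.sum_congr rfl
  intro j hj
  rw [h j (Finset.ne_of_mem_erase hj)]

/-- class index of the edge `{u, v}` -/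
noncomputable def KcN (u v : ∀ j, W j) : ℕ :=
  if h : ∃ i, (T i).Adj (u i) (v i) then
    off T h.choose +
      ((ecolN T g h.choose (u h.choose) (v h.choose) + sig T g h.choose u) % (T h.choose).maxDegree)
  else 0

lemma dir_unique {u v : ∀ j, W j} (h : (boxProdPi T).Adj u v) {i i' : Fin n}
    (hi : (T i).Adj (u i) (v i)) (hi' : (T i').Adj (u i') (v i')) : i = i' := by
  obtain ⟨i0, hadj, hoth⟩ := h
  have e1 : i = i0 := by
    by_contra hne
    exact (T i).irrefl (hoth i hne ▸ hi)
  have e2 : i' = i0 := by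
    by_contra hne
    exact (T i').irrefl (hoth i' hne ▸ hi')
  rw [e1, e2]

lemma KcN_spec {u v : ∀ j, W j} (h : (boxProdPi T).Adj u v) {i : Fin n}
    (hi : (T i).Adj (u i) (v i)) :
    KcN T g u v = off T i + ((ecolN T g i (u i) (v i) + sig T g i u) % (T i).maxDegree) := by
  have hex : ∃ j, (T j).Adj (u j) (v j) := ⟨i, hi⟩
  have hch : hex.choose = i := dir_unique T h hex.choose_spec hi
  subst hch
  rw [KcN, dif_pos hex]

lemma KcN_symm {u v : ∀ j, W j} (h : (boxProdPi T).Adj u v) : KcN T g u v = KcN T g v u := by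
  obtain ⟨i, hadj, hoth⟩ := h
  rw [KcN_spec T g ⟨i, hadj, hoth⟩ hadj,
    KcN_spec T g ((boxProdPi T).symm.symm _ _ ⟨i, hadj, hoth⟩) hadj.symm]
  rw [ecolN_symm T g hadj, sig_eq T g (fun j hj => hoth j hj)]


lemma nat_mod_succ_ne {m a : ℕ} (hm : 2 ≤ m) : (a + 1) % m ≠ a % m := by
  intro h
  rw [Nat.add_mod a 1, Nat.mod_eq_of_lt (by omega : 1 < m)] at h
  have hx : a % m < m := Nat.mod_lt _ (by omega)
  rcases Nat.lt_or_ge (a % m + 1) m with hlt | hge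
  · rw [Nat.mod_eq_of_lt hlt] at h
    omega
  · have : a % m + 1 = m := by omega
    rw [this, Nat.mod_self] at h
    omega

lemma nat_add_mod_cancel {a b s m : ℕ} (ha : a < m) (hb : b < m)
    (h : (a + s) % m = (b + s) % m) : a = b := by
  have h2 : a % m = b % m := Nat.ModEq.add_right_cancel' s h
  rwa [Nat.mod_eq_of_lt ha, Nat.mod_eq_of_lt hb] at h2

/-- the classes of the decomposition, indexed by naturals -/
noncomputable def Ecl (pn : ℕ) : Set (Sym2 (∀ j, W j)) :=
  {e | ∃ u v, (boxProdPi T).Adj u v ∧ e = s(u, v) ∧ KcN T g u v = pn}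

lemma mem_Ecl_iff {u v : ∀ j, W j} (h : (boxProdPi T).Adj u v) {pn : ℕ} :
    s(u, v) ∈ Ecl T g pn ↔ KcN T g u v = pn := by
  constructor
  · rintro ⟨u', v', h', he, hk⟩
    rcases Sym2.eq_iff.1 he with ⟨rfl, rfl⟩ | ⟨rfl, rfl⟩
    · exact hk
    · rw [KcN_symm T g h]
      exact hk
  · intro hk
    exact ⟨u, v, h, rfl, hk⟩

lemma Ecl_nat_eq {e : Sym2 (∀ j, W j)} {pn qn : ℕ} (hp : e ∈ Ecl T g pn)
    (hq : e ∈ Ecl T g qn) : pn = qn := by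
  obtain ⟨u, v, h, rfl, hk⟩ := hp
  rw [mem_Ecl_iff T g h] at hq
  omega

lemma Ecl_subset_edgeSet {pn : ℕ} : Ecl T g pn ⊆ (boxProdPi T).edgeSet := by
  rintro e ⟨u, v, h, rfl, -⟩
  exact h

lemma KcN_lt (hΔ : ∀ i, 0 < (T i).maxDegree) {u v : ∀ j, W j}
    (h : (boxProdPi T).Adj u v) : KcN T g u v < ∑ j, (T j).maxDegree := by
  obtain ⟨i, hi, -⟩ := id h
  rw [KcN_spec T g h hi]
  exact off_add_lt T (Nat.mod_lt _ (hΔ i))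

/-- every class is a matching -/
lemma Ecl_matching (hΔ : ∀ i, 0 < (T i).maxDegree) {pn : ℕ} :
    ∀ e ∈ Ecl T g pn, ∀ f ∈ Ecl T g pn, e ≠ f → ∀ z, z ∈ e → z ∉ f := by
  have key : ∀ (z b c : ∀ j, W j), (boxProdPi T).Adj z b → (boxProdPi T).Adj z c →
      KcN T g z b = pn → KcN T g z c = pn → b = c := by
    intro z b c hb hc hkb hkc
    obtain ⟨i, hbi, hbo⟩ := hb
    obtain ⟨i', hci, hco⟩ := hc
    rw [KcN_spec T g ⟨i, hbi, hbo⟩ hbi] at hkb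
    rw [KcN_spec T g ⟨i', hci, hco⟩ hci] at hkc
    have hblock := block_inj T (Nat.mod_lt _ (hΔ i)) (Nat.mod_lt _ (hΔ i'))
      (hkb.trans hkc.symm)
    obtain ⟨rfl, hkk⟩ := hblock
    by_cases hbc : b i = c i
    · funext j
      by_cases hji : j = i
      · rw [hji]; exact hbc
      · rw [← hbo j hji, ← hco j hji]
    · exfalso
      have hcolb : ecolN T g i (z i) (b i) < (T i).maxDegree := by
        rcases ecolN_lt T g (i := i) (z i) (b i) with h1 | ⟨h1, -⟩
        · exact h1
        · exact absurd (hΔ i) (by omega)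
      have hcolc : ecolN T g i (z i) (c i) < (T i).maxDegree := by
        rcases ecolN_lt T g (i := i) (z i) (c i) with h1 | ⟨h1, -⟩
        · exact h1
        · exact absurd (hΔ i) (by omega)
      have heq := nat_add_mod_cancel hcolb hcolc hkk
      have hprop := (g i).col_proper (z i) (b i) (c i) hbi hci hbc
      apply hprop
      have e1 : ecolN T g i (z i) (b i) =
          ((if (g i).dep (z i) < (g i).dep (b i) then (g i).col (b i) else (g i).col (z i) : Fin _) : ℕ) := by
        rw [ecolN]; split <;> simp_all
      have e2 : ecolN T g i (z i) (c i) =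
          ((if (g i).dep (z i) < (g i).dep (c i) then (g i).col (c i) else (g i).col (z i) : Fin _) : ℕ) := by
        rw [ecolN]; split <;> simp_all
    
      apply Fin.ext
      rw [← e1, ← e2]
      exact heq
  rintro e ⟨u, v, huv, rfl, hke⟩ f hf hef z hze hzf
  -- get representations of e and f based at z
  have he' : ∃ b, (boxProdPi T).Adj z b ∧ s(u,v) = s(z, b) ∧ KcN T g z b = pn := by
    rcases Sym2.mem_iff.1 hze with rfl | rfl
    · exact ⟨v, huv, rfl, hke⟩
    · exact ⟨u, huv.symm, Sym2.eq_swap, by rw [← KcN_symm T g huv]; exact hke⟩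
  obtain ⟨b, hzb, heb, hkb⟩ := he'
  obtain ⟨u', v', hu'v', rfl, hkf⟩ := hf
  have hf' : ∃ c, (boxProdPi T).Adj z c ∧ s(u',v') = s(z, c) ∧ KcN T g z c = pn := by
    rcases Sym2.mem_iff.1 hzf with rfl | rfl
    · exact ⟨v', hu'v', rfl, hkf⟩
    · exact ⟨u', hu'v'.symm, Sym2.eq_swap, by rw [← KcN_symm T g hu'v']; exact hkf⟩
  obtain ⟨c, hzc, hec, hkc⟩ := hf'
  have := key z b c hzb hzc hkb hkc
  subst this
  exact hef (heb.trans hec.symm)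

lemma sig_adj (i : Fin n) {u v : ∀ j, W j} {j : Fin n} (hj : (T j).Adj (u j) (v j))
    (hoth : ∀ l, l ≠ j → u l = v l) (hij : j ≠ i) :
    sig T g i v = sig T g i u + 1 ∨ sig T g i u = sig T g i v + 1 := by
  have hjmem : j ∈ Finset.univ.erase i := Finset.mem_erase.2 ⟨hij, Finset.mem_univ _⟩
  have hu : sig T g i u = (g j).dep (u j) + ∑ l ∈ (Finset.univ.erase i).erase j, (g l).dep (u l) :=
    (Finset.add_sum_erase _ _ hjmem).symm
  have hv : sig T g i v = (g j).dep (v j) + ∑ l ∈ (Finset.univ.erase i).erase j, (g l).dep (v l) :=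
    (Finset.add_sum_erase _ _ hjmem).symm
  have hre : ∑ l ∈ (Finset.univ.erase i).erase j, (g l).dep (u l) =
      ∑ l ∈ (Finset.univ.erase i).erase j, (g l).dep (v l) := by
    apply Finset.sum_congr rfl
    intro l hl
    rw [hoth l (Finset.ne_of_mem_erase hl)]
  rcases (g j).dep_adj (u j) (v j) hj with hd | hd
  · left; omega
  · right; omega


end Product


section Positivity

variable {n : ℕ} {W : Fin n → Type*} [∀ i, Fintype (W i)] [∀ i, DecidableEq (W i)]
  (T : ∀ i, SimpleGraph (W i)) [∀ i, DecidableRel (T i).Adj]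
  (g : ∀ i, Gadget (T i) ((T i).maxDegree))

lemma Ecl_positive (hΔ : ∀ i, 2 ≤ (T i).maxDegree) {P : ℕ} (hP : P = ∑ j, (T j).maxDegree)
    (p : Fin P) :
    IsPositiveMatching
      ((boxProdPi T).deleteEdges (⋃ q : Fin P, ⋃ (_ : q < p), Ecl T g (q : ℕ)))
      (Ecl T g (p : ℕ)) := by
  have hΔ0 : ∀ i, 0 < (T i).maxDegree := fun i => by have := hΔ i; omega
  refine ⟨?_, Ecl_matching T g hΔ0, ?_⟩
  · -- subset of remaining edge set
    intro e he
    rw [SimpleGraph.edgeSet_deleteEdges]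
    refine ⟨Ecl_subset_edgeSet T g he, ?_⟩
    intro hmem
    rw [Set.mem_iUnion] at hmem
    obtain ⟨q, hmem⟩ := hmem
    rw [Set.mem_iUnion] at hmem
    obtain ⟨hqp, hmem⟩ := hmem
    have heq : (p : ℕ) = (q : ℕ) := Ecl_nat_eq T g he hmem
    rw [Fin.lt_def] at hqp
    omega
  · -- weights
    by_cases hex : ∃ u v, (boxProdPi T).Adj u v ∧ KcN T g u v = (p : ℕ)
    case neg =>
      refine ⟨fun _ => -1, ?_⟩
      intro u v hadj
      rw [SimpleGraph.deleteEdges_adj] at hadj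
      constructor
      · intro h0; norm_num at h0
      · rintro ⟨u', v', h', he, hk⟩
        exact absurd ⟨u', v', h', hk⟩ hex
    case pos =>
    obtain ⟨u0, v0, h0, hk0⟩ := hex
    obtain ⟨i, hi0, -⟩ := id h0
    obtain ⟨k, hkdef⟩ : ∃ k, k = (ecolN T g i (u0 i) (v0 i) + sig T g i u0) % (T i).maxDegree :=
      ⟨_, rfl⟩
    have hkD : k < (T i).maxDegree := by rw [hkdef]; exact Nat.mod_lt _ (hΔ0 i)
    have hpik : (p : ℕ) = off T i + k := by rw [← hk0, KcN_spec T g h0 hi0, hkdef]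
    set pat : W i → ℕ → ℝ := fun t δ =>
      if (((g i).col t : ℕ) + δ) % (T i).maxDegree = k then 1 else -2 * 6 ^ ((g i).dep t)
      with hpat
    have h6 : ∀ d : ℕ, (0:ℝ) < 6 ^ d := fun d => by positivity
    have h61 : ∀ d : ℕ, (1:ℝ) ≤ 6 ^ d := fun d => one_le_pow₀ (by norm_num)
    have hb : ∀ t δ, |pat t δ| ≤ 2 * 6 ^ ((g i).dep t) := by
      intro t δ
      simp only [hpat]
      by_cases hhit : (((g i).col t : ℕ) + δ) % (T i).maxDegree = k
      · rw [if_pos hhit, abs_one]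
        have := h61 ((g i).dep t)
        linarith
      · rw [if_neg hhit]
        have he2 : (-2 * 6 ^ ((g i).dep t) : ℝ) = -(2 * 6 ^ ((g i).dep t)) := by ring
        rw [he2, abs_neg, abs_of_nonneg (by positivity)]
    have hps : ∀ t σ, pat t (σ % (T i).maxDegree) + pat t ((σ + 1) % (T i).maxDegree) ≤
        1 - 2 * 6 ^ ((g i).dep t) := by
      intro t σ
      have hnb : ¬ (((((g i).col t : ℕ) + σ % (T i).maxDegree) % (T i).maxDegree = k) ∧
          ((((g i).col t : ℕ) + (σ + 1) % (T i).maxDegree) % (T i).maxDegree = k)) := by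
        rintro ⟨h1, h2⟩
        rw [Nat.add_mod_mod] at h1 h2
        rw [← Nat.add_assoc] at h2
        exact nat_mod_succ_ne (hΔ i) (h2.trans h1.symm)
      simp only [hpat]
      by_cases hh1 : (((g i).col t : ℕ) + σ % (T i).maxDegree) % (T i).maxDegree = k
      · have hh2 : ¬ (((g i).col t : ℕ) + (σ + 1) % (T i).maxDegree) % (T i).maxDegree = k :=
          fun hh => hnb ⟨hh1, hh⟩
        rw [if_pos hh1, if_neg hh2]
        linarith
      · rw [if_neg hh1]
        by_cases hh2 : (((g i).col t : ℕ) + (σ + 1) % (T i).maxDegree) % (T i).maxDegree = k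
        · rw [if_pos hh2]
          linarith
        · rw [if_neg hh2]
          have := h6 ((g i).dep t)
          linarith
    refine ⟨fun z => Xf (g i).root (g i).par (g i).dep pat (z i)
      (sig T g i z % (T i).maxDegree), ?_⟩
    intro u v hadj
    rw [SimpleGraph.deleteEdges_adj] at hadj
    obtain ⟨hAdj, hndel⟩ := hadj
    obtain ⟨j, hj, hoth⟩ := id hAdj
    show 0 < Xf (g i).root (g i).par (g i).dep pat (u i) (sig T g i u % (T i).maxDegree) +
        Xf (g i).root (g i).par (g i).dep pat (v i) (sig T g i v % (T i).maxDegree) ↔ _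
    rcases lt_trichotomy j i with hji | hji | hji
    · -- j < i : this edge was deleted earlier, contradiction
      exfalso
      apply hndel
      have hq : KcN T g u v < P := by rw [hP]; exact KcN_lt T g hΔ0 hAdj
      have hqp : KcN T g u v < (p : ℕ) := by
        rw [KcN_spec T g hAdj hj, hpik]
        have h1 : (ecolN T g j (u j) (v j) + sig T g j u) % (T j).maxDegree <
            (T j).maxDegree := Nat.mod_lt _ (hΔ0 j)
        have h2 := off_add_le T hji
        omega
      rw [Set.mem_iUnion]
      refine ⟨⟨KcN T g u v, hq⟩, ?_⟩
      rw [Set.mem_iUnion]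
      exact ⟨Fin.lt_def.2 hqp, ⟨u, v, hAdj, rfl, rfl⟩⟩
    · -- j = i : a matching-direction edge
      rw [hji] at hj hoth
      have hsig : sig T g i u = sig T g i v := sig_eq T g (fun l hl => hoth l hl)
      have hmemiff0 : (s(u, v) ∈ Ecl T g (p : ℕ)) ↔
          (ecolN T g i (u i) (v i) + sig T g i u) % (T i).maxDegree = k := by
        rw [mem_Ecl_iff T g hAdj, KcN_spec T g hAdj hj, hpik]
        constructor
        · intro h
          exact (block_inj T (Nat.mod_lt _ (hΔ0 i)) hkD h).2
        · intro h
          rw [h]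
      rcases (g i).dep_adj (u i) (v i) hj with hd | hd
      · -- v i is deeper
        have htne : v i ≠ (g i).root := by
          intro hr
          have h0' := (g i).dep_root
          rw [hr, h0'] at hd
          omega
        have hpar_eq : u i = (g i).par (v i) := (g i).par_uniq (u i) (v i) hj hd
        have hXstep := Xf_step (g i).root (g i).par (g i).dep pat (g i).root_of_dep
          (g i).par_dep htne (sig T g i v % (T i).maxDegree)
        rw [← hpar_eq] at hXstep
        rw [hsig, hXstep]
        have hecol : ecolN T g i (u i) (v i) = ((g i).col (v i) : ℕ) := by
          rw [ecolN, if_pos (by omega)]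
        rw [hmemiff0, hecol, hsig]
        have harr : Xf (g i).root (g i).par (g i).dep pat (u i)
              (sig T g i v % (T i).maxDegree) +
            (pat (v i) (sig T g i v % (T i).maxDegree) -
              Xf (g i).root (g i).par (g i).dep pat (u i) (sig T g i v % (T i).maxDegree)) =
            pat (v i) (sig T g i v % (T i).maxDegree) := by ring
        rw [harr]
        simp only [hpat]
        rw [Nat.add_mod_mod]
        split_ifs with hh
        · simp only [hh]
          norm_num
        · have := h6 ((g i).dep (v i))
          constructor
          · intro h0'
            linarith
          · intro h0'
            exact absurd h0' hh
      · -- u i is deeper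
        have htne : u i ≠ (g i).root := by
          intro hr
          have h0' := (g i).dep_root
          rw [hr, h0'] at hd
          omega
        have hpar_eq : v i = (g i).par (u i) := (g i).par_uniq (v i) (u i) hj.symm hd
        have hXstep := Xf_step (g i).root (g i).par (g i).dep pat (g i).root_of_dep
          (g i).par_dep htne (sig T g i u % (T i).maxDegree)
        rw [← hpar_eq] at hXstep
        rw [← hsig, hXstep]
        have hecol : ecolN T g i (u i) (v i) = ((g i).col (u i) : ℕ) := by
          rw [ecolN, if_neg (by omega)]
        rw [hmemiff0, hecol]
        have harr : pat (u i) (sig T g i u % (T i).maxDegree) -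
              Xf (g i).root (g i).par (g i).dep pat (v i) (sig T g i u % (T i).maxDegree) +
            Xf (g i).root (g i).par (g i).dep pat (v i) (sig T g i u % (T i).maxDegree) =
            pat (u i) (sig T g i u % (T i).maxDegree) := by ring
        rw [harr]
        simp only [hpat]
        rw [Nat.add_mod_mod]
        split_ifs with hh
        · simp only [hh]
          norm_num
        · have := h6 ((g i).dep (u i))
          constructor
          · intro h0'
            linarith
          · intro h0'
            exact absurd h0' hh
    · -- i < j : a transverse edge, weight sum is nonpositive
      have hij : j ≠ i := Fin.ne_of_gt hji
      have huvi : u i = v i := hoth i (Ne.symm hij)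
      have hsig := sig_adj T g i hj hoth hij
      have hle : Xf (g i).root (g i).par (g i).dep pat (u i)
            (sig T g i u % (T i).maxDegree) +
          Xf (g i).root (g i).par (g i).dep pat (v i)
            (sig T g i v % (T i).maxDegree) ≤ 0 := by
        rw [← huvi]
        rcases hsig with hs | hs
        · rw [hs]
          exact Xf_pair (g i).root (g i).par (g i).dep pat (g i).dep_root
            (g i).root_of_dep (g i).par_dep hb _ _ (fun _ => hps (u i) (sig T g i u))
        · rw [hs]
          rw [add_comm]
          exact Xf_pair (g i).root (g i).par (g i).dep pat (g i).dep_root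
            (g i).root_of_dep (g i).par_dep hb _ _ (fun _ => hps (u i) (sig T g i v))
      constructor
      · intro h0'
        linarith
      · intro hmem
        exfalso
        rw [mem_Ecl_iff T g hAdj, KcN_spec T g hAdj hj, hpik] at hmem
        have := (block_inj T (Nat.mod_lt _ (hΔ0 j)) hkD hmem).1
        exact hij this

lemma isPMD_Ecl (hΔ : ∀ i, 2 ≤ (T i).maxDegree) :
    IsPMD (boxProdPi T) (fun p : Fin (∑ j, (T j).maxDegree) => Ecl T g (p : ℕ)) := by
  have hΔ0 : ∀ i, 0 < (T i).maxDegree := fun i => by have := hΔ i; omega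
  refine ⟨?_, ?_, ?_⟩
  · intro p q hpq
    rw [Set.disjoint_left]
    intro e hep heq
    exact hpq (Fin.ext (Ecl_nat_eq T g hep heq))
  · apply Set.eq_of_subset_of_subset
    · intro e he
      rw [Set.mem_iUnion] at he
      obtain ⟨q, hq⟩ := he
      exact Ecl_subset_edgeSet T g hq
    · intro e he
      induction e using Sym2.ind with
      | _ u v =>
        rw [SimpleGraph.mem_edgeSet] at he
        rw [Set.mem_iUnion]
        exact ⟨⟨KcN T g u v, KcN_lt T g hΔ0 he⟩, ⟨u, v, he, rfl, rfl⟩⟩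
  · intro p
    exact Ecl_positive T g hΔ rfl p

lemma pmd_lower_bound (hne : ∀ i, Nonempty (W i)) {p : ℕ}
    (E : Fin p → Set (Sym2 (∀ j, W j))) (hE : IsPMD (boxProdPi T) E) :
    ∑ j, (T j).maxDegree ≤ p := by
  classical
  have hvm0 : ∀ i, ∃ v : W i, (T i).maxDegree = (T i).degree v := fun i => by
    haveI := hne i
    exact (T i).exists_maximal_degree_vertex
  choose vm hvm using hvm0
  have hadj : ∀ (i : Fin n) (y : W i), y ∈ (T i).neighborFinset (vm i) →
      (boxProdPi T).Adj (fun j => vm j) (Function.update (fun j => vm j) i y) := by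
    intro i y hy
    refine ⟨i, ?_, ?_⟩
    · rw [Function.update_self]
      exact ((T i).mem_neighborFinset _ _).1 hy
    · intro j hj
      rw [Function.update_of_ne hj]
  have hcls : ∀ (i : Fin n) (y : W i), y ∈ (T i).neighborFinset (vm i) →
      ∃ q : Fin p, s(fun j => vm j, Function.update (fun j => vm j) i y) ∈ E q := by
    intro i y hy
    have hedge : s(fun j => vm j, Function.update (fun j => vm j) i y) ∈
        (boxProdPi T).edgeSet := hadj i y hy
    rw [← hE.2.1, Set.mem_iUnion] at hedge
    exact hedge
  set F : (Σ i : Fin n, ((T i).neighborFinset (vm i) : Finset (W i))) → Fin p :=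
    fun x => (hcls x.1 x.2.1 x.2.2).choose with hF
  have hFinj : Function.Injective F := by
    rintro ⟨i, y, hy⟩ ⟨i', y', hy'⟩ hxx
    have h1 := (hcls i y hy).choose_spec
    have h2 := (hcls i' y' hy').choose_spec
    rw [show (hcls i y hy).choose = F ⟨i, ⟨y, hy⟩⟩ from rfl, hxx] at h1
    rw [show (hcls i' y' hy').choose = F ⟨i', ⟨y', hy'⟩⟩ from rfl] at h2
    have hvin1 : (fun j => vm j) ∈ s(fun j => vm j, Function.update (fun j => vm j) i y) :=
      Sym2.mem_mk_left _ _
    have hvin2 : (fun j => vm j) ∈ s(fun j => vm j, Function.update (fun j => vm j) i' y') :=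
      Sym2.mem_mk_left _ _
    have heq : s(fun j => vm j, Function.update (fun j => vm j) i y) =
        s(fun j => vm j, Function.update (fun j => vm j) i' y') := by
      by_contra hne'
      exact (hE.2.2 (F ⟨i', ⟨y', hy'⟩⟩)).2.1 _ h1 _ h2 hne' _ hvin1 hvin2
    have hyne : y ≠ vm i := by
      intro h
      have hh := ((T i).mem_neighborFinset _ _).1 hy
      rw [h] at hh
      exact (T i).irrefl hh
    rcases Sym2.eq_iff.1 heq with ⟨-, hupd⟩ | ⟨hvb, -⟩
    · by_cases hii : i = i'
      · subst hii
        have hyy := congrFun hupd i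
        rw [Function.update_self, Function.update_self] at hyy
        subst hyy
        rfl
      · exfalso
        have hyy := congrFun hupd i
        rw [Function.update_self, Function.update_of_ne hii] at hyy
        exact hyne hyy
    · exfalso
      have hcf := congrFun hvb i'
      rw [Function.update_self] at hcf
      have hadj' := ((T i').mem_neighborFinset _ _).1 hy'
      rw [← hcf] at hadj'
      exact (T i').irrefl hadj'
  have hcard := Fintype.card_le_of_injective F hFinj
  rw [Fintype.card_fin, Fintype.card_sigma] at hcard
  have hkey : ∑ j, (T j).maxDegree =
      ∑ j : Fin n, Fintype.card ((T j).neighborFinset (vm j) : Finset (W j)) := by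
    apply Finset.sum_congr rfl
    intro j _
    rw [Fintype.card_coe, SimpleGraph.card_neighborFinset_eq_degree]
    exact hvm j
  omega

end Positivity

end PmdAux

namespace PmdAux

section Klem

variable {Wt : Type*} [Fintype Wt] [DecidableEq Wt] {T : SimpleGraph Wt} [DecidableRel T.Adj]

lemma nonempty_of_edge (h : T.edgeSet.Nonempty) : Nonempty Wt := by
  obtain ⟨e, he⟩ := h
  induction e using Sym2.ind with
  | _ u v => exact ⟨u⟩

lemma two_le_maxDegree (ht : T.IsTree) (he : T.edgeSet.Nonempty)
    (hk : ¬ Nonempty (T ≃g (⊤ : SimpleGraph (Fin 2)))) : 2 ≤ T.maxDegree := by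
  by_contra hle
  push_neg at hle
  obtain ⟨e, hee⟩ := he
  obtain ⟨x, y, hxy⟩ : ∃ x y, T.Adj x y := by
    induction e using Sym2.ind with
    | _ u v => exact ⟨u, v, hee⟩
  have hdeg : ∀ (z a b : Wt), T.Adj z a → T.Adj z b → a ≠ b → False := by
    intro z a b hza hzb hab
    have hsub : ({a, b} : Finset Wt) ⊆ T.neighborFinset z := by
      intro w hw
      rcases Finset.mem_insert.1 hw with rfl | hw
      · exact (T.mem_neighborFinset _ _).2 hza
      · rw [Finset.mem_singleton] at hw
        subst hw
        exact (T.mem_neighborFinset _ _).2 hzb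
    have hc2 : ({a, b} : Finset Wt).card = 2 := Finset.card_pair hab
    have hcle := Finset.card_le_card hsub
    rw [hc2, SimpleGraph.card_neighborFinset_eq_degree] at hcle
    have := le_trans hcle (T.degree_le_maxDegree z)
    omega
  have hall : ∀ z, z = x ∨ z = y := by
    intro z
    by_contra hz
    push_neg at hz
    obtain ⟨hzx, hzy⟩ := hz
    obtain ⟨w, hw, hwl⟩ := ht.isConnected.exists_path_of_dist x z
    cases w with
    | nil => exact hzx rfl
    | @cons _ b _ h q =>
      by_cases hbv : b = y
      · cases q with
        | nil => exact hzy hbv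
        | @cons _ c _ h2 q2 =>
          have hcx : c ≠ x := by
            intro hcc
            rw [Walk.cons_isPath_iff] at hw
            apply hw.2
            rw [Walk.support_cons]
            exact List.mem_cons_of_mem _ (hcc ▸ q2.start_mem_support)
          exact hdeg y c x (hbv ▸ h2) hxy.symm hcx
      · exact hdeg x b y h hxy hbv
  exfalso
  apply hk
  have hxyne := T.ne_of_adj hxy
  refine ⟨⟨⟨fun z => if z = x then 0 else 1, fun i => if i = 0 then x else y, ?_, ?_⟩, ?_⟩⟩
  · intro z
    rcases hall z with rfl | rfl
    · simp
    · simp [hxyne.symm]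
  · intro i
    fin_cases i
    · simp
    · simp [hxyne.symm]
  · intro a b
    simp only [Equiv.coe_fn_mk, SimpleGraph.top_adj]
    constructor
    · intro hfab
      have hab : a ≠ b := fun h => hfab (by rw [h])
      rcases hall a with ha | ha <;> rcases hall b with hb | hb
      · exact absurd (ha.trans hb.symm) hab
      · rw [ha, hb]; exact hxy
      · rw [ha, hb]; exact hxy.symm
      · exact absurd (ha.trans hb.symm) hab
    · intro hab
      have hne' : a ≠ b := T.ne_of_adj hab
      rcases hall a with ha | ha <;> rcases hall b with hb | hb
      · exact absurd (ha.trans hb.symm) hne'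
      · subst ha; subst hb
        simp [hxyne.symm]
      · subst ha; subst hb
        simp [hxyne.symm]
      · exact absurd (ha.trans hb.symm) hne'

end Klem

end PmdAux

/-- If `T₁, …, Tₙ` are trees with at least one edge, none isomorphic to `K₂`, then
`pmd(T₁ □ ⋯ □ Tₙ) = Δ(T₁) + ⋯ + Δ(Tₙ)`, the maximum degree of the product. -/
theorem pmd_boxProd_trees {n : ℕ} {W : Fin n → Type*} [∀ i, Fintype (W i)]
    [∀ i, DecidableEq (W i)] (T : ∀ i, SimpleGraph (W i)) [∀ i, DecidableRel (T i).Adj]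
    (htree : ∀ i, (T i).IsTree) (hedge : ∀ i, (T i).edgeSet.Nonempty)
    (hK2 : ∀ i, ¬ Nonempty ((T i) ≃g (⊤ : SimpleGraph (Fin 2)))) :
    pmd (boxProdPi T) = ∑ i, (T i).maxDegree := by
  classical
  have hne : ∀ i, Nonempty (W i) := fun i => PmdAux.nonempty_of_edge (hedge i)
  have hΔ : ∀ i, 2 ≤ (T i).maxDegree := fun i =>
    PmdAux.two_le_maxDegree (htree i) (hedge i) (hK2 i)
  have hg : ∀ i, Nonempty (PmdAux.Gadget (T i) ((T i).maxDegree)) := fun i => by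
    haveI := hne i
    exact PmdAux.exists_gadget (T i) (by have := hΔ i; omega) (htree i)
  set g := fun i => (hg i).some with hgdef
  have hmem : (∑ i, (T i).maxDegree) ∈
      {p : ℕ | ∃ E : Fin p → Set (Sym2 (∀ i, W i)), IsPMD (boxProdPi T) E} :=
    ⟨_, PmdAux.isPMD_Ecl T g hΔ⟩
  rw [pmd]
  apply le_antisymm
  · exact Nat.sInf_le hmem
  · have hsne : {p : ℕ | ∃ E : Fin p → Set (Sym2 (∀ i, W i)),
        IsPMD (boxProdPi T) E}.Nonempty := ⟨_, hmem⟩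
    obtain ⟨E', hE'⟩ := Nat.sInf_mem hsne
    exact PmdAux.pmd_lower_bound T hne E' hE'
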